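/- Let G be a group, n ≥ 2 an integer, and H a subgroup of the direct power G^n. Suppose that for every pair of indices i ≠ j, the projection of H onto the product of the i-th and j-th coordinates is all of G × G. If H is a proper subgroup of G^n, then H is contained in a proper normal subgroup N of G^n such that the quotient G^n/N is abelian. -/

import Mathlib

open scoped commutatorElement

section Aux

variable {G : Type*} [Group G] {n : ℕ}

/-- Elements `g` of `G` realizable as the `M`-coordinate of some `h ∈ H` which is `1` on
all coordinates `< m` except possibly at `l`. -/
private def Kr (H : Subgroup (Fin n → G)) (m : ℕ) (M l : Fin n) : Subgroup G where
  carrier := {g | ∃ h ∈ H, (∀ i : Fin n, (i : ℕ) < m → i ≠ l → h i = 1) ∧ h M = g}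
  one_mem' := ⟨1, H.one_mem, fun _ _ _ => rfl, rfl⟩
  mul_mem' := by
    rintro a b ⟨h, hh, hc, rfl⟩ ⟨h', hh', hc', rfl⟩
    exact ⟨h * h', H.mul_mem hh hh',
      fun i hi hil => by simp [Pi.mul_apply, hc i hi hil, hc' i hi hil], rfl⟩
  inv_mem' := by
    rintro a ⟨h, hh, hc, rfl⟩
    exact ⟨h⁻¹, H.inv_mem hh, fun i hi hil => by simp [Pi.inv_apply, hc i hi hil], rfl⟩

/-- Elements `g` of `G` realizable as the `M`-coordinate of some `h ∈ H` which is `1` on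
all coordinates `< m`. -/
private def Kk (H : Subgroup (Fin n → G)) (m : ℕ) (M : Fin n) : Subgroup G where
  carrier := {g | ∃ h ∈ H, (∀ i : Fin n, (i : ℕ) < m → h i = 1) ∧ h M = g}
  one_mem' := ⟨1, H.one_mem, fun _ _ => rfl, rfl⟩
  mul_mem' := by
    rintro a b ⟨h, hh, hc, rfl⟩ ⟨h', hh', hc', rfl⟩
    exact ⟨h * h', H.mul_mem hh hh',
      fun i hi => by simp [Pi.mul_apply, hc i hi, hc' i hi], rfl⟩
  inv_mem' := by
    rintro a ⟨h, hh, hc, rfl⟩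
    exact ⟨h⁻¹, H.inv_mem hh, fun i hi => by simp [Pi.inv_apply, hc i hi], rfl⟩

private lemma Kk_normal (H : Subgroup (Fin n → G)) (hn2 : 2 ≤ n)
    (hproj : ∀ i j : Fin n, i ≠ j → ∀ g₁ g₂ : G, ∃ f ∈ H, f i = g₁ ∧ f j = g₂)
    (m : ℕ) (M : Fin n) : (Kk H m M).Normal := by
  constructor
  rintro g ⟨h, hh, hc, hM⟩ x
  have hj : ∃ j : Fin n, j ≠ M := by
    rcases eq_or_ne M ⟨0, by omega⟩ with h0 | h0
    · exact ⟨⟨1, by omega⟩, by rw [h0]; exact Fin.ne_of_val_ne (by simp)⟩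
    · exact ⟨⟨0, by omega⟩, fun hq => h0 hq.symm⟩
  obtain ⟨j, hjM⟩ := hj
  obtain ⟨f, hf, hfM, -⟩ := hproj M j (fun hq => hjM hq.symm) x 1
  refine ⟨f * h * f⁻¹, H.mul_mem (H.mul_mem hf hh) (H.inv_mem hf), fun i hi => ?_, ?_⟩
  · simp [Pi.mul_apply, Pi.inv_apply, hc i hi]
  · simp [Pi.mul_apply, Pi.inv_apply, hfM, hM]

private lemma E_lemma (H : Subgroup (Fin n → G)) (m : ℕ) (hm : m < n) (M : Fin n)
    (IHa : ∀ x : Fin n → G, ∃ h ∈ H, ∀ i : Fin n, (i : ℕ) < m → h i = x i)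
    [(Kk H m M).Normal] (l : Fin n) (hlm : (l : ℕ) < m) (j : ℕ) (hj : j ≤ m) :
    ∀ h ∈ H, h l = 1 → (∀ i : Fin n, (i : ℕ) < m → j ≤ (i : ℕ) → i ≠ l → h i = 1) →
      (QuotientGroup.mk (h M) : G ⧸ Kk H m M) ∈
        Subgroup.closure {q | ∃ l' : Fin n, (l' : ℕ) < m ∧ l' ≠ l ∧
          ∃ x ∈ Kr H m M l', QuotientGroup.mk x = q} := by
  induction j with
  | zero =>
    intro h hh hl hc
    have hK : h M ∈ Kk H m M := by
      refine ⟨h, hh, fun i hi => ?_, rfl⟩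
      rcases eq_or_ne i l with rfl | hil
      · exact hl
      · exact hc i hi (Nat.zero_le _) hil
    have : (QuotientGroup.mk (h M) : G ⧸ Kk H m M) = 1 :=
      (QuotientGroup.eq_one_iff _).mpr hK
    rw [this]; exact Subgroup.one_mem _
  | succ j ih =>
    intro h hh hl hc
    rcases eq_or_ne j (l : ℕ) with hjl | hjl
    · -- the new index `j` equals `l`, nothing to do
      refine ih (Nat.le_of_succ_le hj) h hh hl fun i hi hji hil => ?_
      rcases Nat.lt_or_ge (j : ℕ) (i : ℕ) with h' | h'
      · exact hc i hi h' hil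
      · exact absurd (Fin.ext (by omega : (i : ℕ) = (l : ℕ))) hil
    · have hjm : j < m := hj
      set J : Fin n := ⟨j, lt_trans hjm hm⟩ with hJ
      obtain ⟨w, hw, hwc⟩ := IHa (fun i => if i = J then h J else 1)
      have hwJ : w J = h J := by rw [hwc J hjm]; simp
      have hwR : w M ∈ Kr H m M J := by
        refine ⟨w, hw, fun i hi hiJ => ?_, rfl⟩
        rw [hwc i hi]; simp [hiJ]
      have hJl : J ≠ l := Fin.ne_of_val_ne hjl
      have hlJ : l ≠ J := Fin.ne_of_val_ne fun hq => hjl hq.symm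
      have h'mem : w⁻¹ * h ∈ H := H.mul_mem (H.inv_mem hw) hh
      have h'l : (w⁻¹ * h) l = 1 := by
        have hwl : w l = 1 := by rw [hwc l hlm]; simp [hlJ]
        simp [Pi.mul_apply, Pi.inv_apply, hwl, hl]
      have h'c : ∀ i : Fin n, (i : ℕ) < m → j ≤ (i : ℕ) → i ≠ l → (w⁻¹ * h) i = 1 := by
        intro i hi hji hil
        rcases eq_or_ne i J with rfl | hiJ
        · simp [Pi.mul_apply, Pi.inv_apply, hwJ]
        · have hij : j < (i : ℕ) := lt_of_le_of_ne hji fun hq => hiJ (Fin.ext hq.symm)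
          have hwi : w i = 1 := by rw [hwc i hi]; simp [hiJ]
          have hhi : h i = 1 := hc i hi hij hil
          simp [Pi.mul_apply, Pi.inv_apply, hwi, hhi]
      have hmem := ih (Nat.le_of_succ_le hj) (w⁻¹ * h) h'mem h'l h'c
      have hsplit : h M = w M * ((w⁻¹ * h) M) := by
        simp [Pi.mul_apply, Pi.inv_apply]
      rw [hsplit]
      have : (QuotientGroup.mk (w M * ((w⁻¹ * h) M)) : G ⧸ Kk H m M)
          = QuotientGroup.mk (w M) * QuotientGroup.mk ((w⁻¹ * h) M) := rfl
      rw [this]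
      exact Subgroup.mul_mem _
        (Subgroup.subset_closure ⟨J, hjm, hJl, w M, hwR, rfl⟩) hmem

private lemma Kr_comm (H : Subgroup (Fin n → G)) (m : ℕ) (M : Fin n) (l l' : Fin n)
    (hne : l ≠ l') {x y : G} (hx : x ∈ Kr H m M l) (hy : y ∈ Kr H m M l') :
    ⁅x, y⁆ ∈ Kk H m M := by
  obtain ⟨h, hh, hc, hM⟩ := hx
  obtain ⟨h', hh', hc', hM'⟩ := hy
  refine ⟨⁅h, h'⁆, H.mul_mem (H.mul_mem (H.mul_mem hh hh') (H.inv_mem hh)) (H.inv_mem hh'),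
    fun i hi => ?_, ?_⟩
  · rcases eq_or_ne i l with rfl | hil
    · have : h' i = 1 := hc' i hi (fun hq => hne hq)
      simp [commutatorElement_def, Pi.mul_apply, Pi.inv_apply, this]
    · have : h i = 1 := hc i hi hil
      simp [commutatorElement_def, Pi.mul_apply, Pi.inv_apply, this]
  · simp [commutatorElement_def, Pi.mul_apply, Pi.inv_apply, hM, hM']

private lemma Kr_central (H : Subgroup (Fin n → G)) (hn2 : 2 ≤ n)
    (hproj : ∀ i j : Fin n, i ≠ j → ∀ g₁ g₂ : G, ∃ f ∈ H, f i = g₁ ∧ f j = g₂)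
    (m : ℕ) (hm : m < n) (M : Fin n) (hM : (M : ℕ) = m)
    (IHa : ∀ x : Fin n → G, ∃ h ∈ H, ∀ i : Fin n, (i : ℕ) < m → h i = x i)
    [(Kk H m M).Normal] (l : Fin n) (hlm : (l : ℕ) < m) :
    ∀ x ∈ Kr H m M l,
      (QuotientGroup.mk x : G ⧸ Kk H m M) ∈ Subgroup.center (G ⧸ Kk H m M) := by
  intro x hx
  rw [Subgroup.mem_center_iff]
  intro q
  obtain ⟨t, rfl⟩ := QuotientGroup.mk_surjective q
  have hlM : l ≠ M := Fin.ne_of_val_ne (by omega)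
  obtain ⟨h, hh, hhl, hhM⟩ := hproj l M hlM 1 t
  have hmem := E_lemma H m hm M IHa l hlm m le_rfl h hh hhl
    (fun i hi hmi _ => absurd hi (by omega))
  rw [hhM] at hmem
  -- every element of the closure commutes with `mk x`
  have key : ∀ q' ∈ Subgroup.closure {q : G ⧸ Kk H m M | ∃ l' : Fin n, (l' : ℕ) < m ∧ l' ≠ l ∧
      ∃ y ∈ Kr H m M l', QuotientGroup.mk y = q}, Commute (QuotientGroup.mk x) q' := by
    intro q' hq'
    induction hq' using Subgroup.closure_induction with
    | mem z hz =>
      obtain ⟨l', hl'm, hl'l, y, hy, rfl⟩ := hz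
      have hcomm : ⁅x, y⁆ ∈ Kk H m M := Kr_comm H m M l l' (fun hq => hl'l hq.symm) hx hy
      have : (QuotientGroup.mk ⁅x, y⁆ : G ⧸ Kk H m M) = 1 :=
        (QuotientGroup.eq_one_iff _).mpr hcomm
      have : ⁅(QuotientGroup.mk x : G ⧸ Kk H m M), (QuotientGroup.mk y : G ⧸ Kk H m M)⁆ = 1 := by
        rw [← this]; rfl
      exact commutatorElement_eq_one_iff_commute.mp this
    | one => exact Commute.one_right _
    | mul a b _ _ ha hb => exact Commute.mul_right ha hb
    | inv a _ ha => exact Commute.inv_right ha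
  exact (key _ hmem).symm

private lemma comm_mem_Kk (H : Subgroup (Fin n → G)) (hn2 : 2 ≤ n)
    (hproj : ∀ i j : Fin n, i ≠ j → ∀ g₁ g₂ : G, ∃ f ∈ H, f i = g₁ ∧ f j = g₂)
    (m : ℕ) (hm1 : 1 ≤ m) (hm : m < n) (M : Fin n) (hM : (M : ℕ) = m)
    (IHa : ∀ x : Fin n → G, ∃ h ∈ H, ∀ i : Fin n, (i : ℕ) < m → h i = x i)
    [(Kk H m M).Normal] (g₁ g₂ : G) : ⁅g₁, g₂⁆ ∈ Kk H m M := by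
  have hzn : (0 : ℕ) < n := by omega
  set l0 : Fin n := ⟨0, hzn⟩ with hl0
  have hl0m : (l0 : ℕ) < m := hm1
  have hl0M : l0 ≠ M := Fin.ne_of_val_ne (by omega)
  -- `mk g₁` is central
  have hcen : (QuotientGroup.mk g₁ : G ⧸ Kk H m M) ∈ Subgroup.center (G ⧸ Kk H m M) := by
    obtain ⟨h, hh, hhl, hhM⟩ := hproj l0 M hl0M 1 g₁
    have hmem := E_lemma H m hm M IHa l0 hl0m m le_rfl h hh hhl
      (fun i hi hmi _ => absurd hi (by omega))
    rw [hhM] at hmem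
    have hsub : {q : G ⧸ Kk H m M | ∃ l' : Fin n, (l' : ℕ) < m ∧ l' ≠ l0 ∧
        ∃ y ∈ Kr H m M l', QuotientGroup.mk y = q} ⊆ Subgroup.center (G ⧸ Kk H m M) := by
      rintro q ⟨l', hl'm, hl'l, y, hy, rfl⟩
      exact Kr_central H hn2 hproj m hm M hM IHa l' hl'm y hy
    exact (Subgroup.closure_le _ |>.mpr hsub) hmem
  have hcomm : Commute (QuotientGroup.mk g₁ : G ⧸ Kk H m M) (QuotientGroup.mk g₂) :=
    (Subgroup.mem_center_iff.mp hcen _).symm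
  have : (QuotientGroup.mk ⁅g₁, g₂⁆ : G ⧸ Kk H m M) = 1 := by
    have := commutatorElement_eq_one_iff_commute.mpr hcomm
    rw [← this]; rfl
  exact (QuotientGroup.eq_one_iff _).mp this

private lemma subclaim (H : Subgroup (Fin n → G)) (m : ℕ) (M : Fin n)
    (IHa : ∀ x : Fin n → G, ∃ h ∈ H, ∀ i : Fin n, (i : ℕ) < m → h i = x i)
    (hcomm : ∀ g₁ g₂ : G, ⁅g₁, g₂⁆ ∈ Kk H m M) :
    ∀ c ∈ commutator (Fin n → G),
      ∃ u ∈ H, (∀ i : Fin n, (i : ℕ) < m → u i = c i) ∧ u M ∈ Kk H m M ∧ c M ∈ Kk H m M := by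
  intro c hc
  rw [commutator_eq_closure] at hc
  induction hc using Subgroup.closure_induction with
  | mem z hz =>
    obtain ⟨a, b, rfl⟩ := hz
    obtain ⟨ha, hha, hac⟩ := IHa a
    obtain ⟨hb, hhb, hbc⟩ := IHa b
    refine ⟨⁅ha, hb⁆,
      H.mul_mem (H.mul_mem (H.mul_mem hha hhb) (H.inv_mem hha)) (H.inv_mem hhb),
      fun i hi => ?_, ?_, ?_⟩
    · simp [commutatorElement_def, Pi.mul_apply, Pi.inv_apply, hac i hi, hbc i hi]
    · have : (⁅ha, hb⁆ : Fin n → G) M = ⁅ha M, hb M⁆ := by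
        simp [commutatorElement_def, Pi.mul_apply, Pi.inv_apply]
      rw [this]; exact hcomm _ _
    · have : (⁅a, b⁆ : Fin n → G) M = ⁅a M, b M⁆ := by
        simp [commutatorElement_def, Pi.mul_apply, Pi.inv_apply]
      rw [this]; exact hcomm _ _
  | one => exact ⟨1, H.one_mem, fun _ _ => rfl, Subgroup.one_mem _, Subgroup.one_mem _⟩
  | mul a b _ _ ha hb =>
    obtain ⟨u, hu, huc, huM, haM⟩ := ha
    obtain ⟨v, hv, hvc, hvM, hbM⟩ := hb
    exact ⟨u * v, H.mul_mem hu hv,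
      fun i hi => by simp [Pi.mul_apply, huc i hi, hvc i hi],
      Subgroup.mul_mem _ huM hvM, Subgroup.mul_mem _ haM hbM⟩
  | inv a _ ha =>
    obtain ⟨u, hu, huc, huM, haM⟩ := ha
    exact ⟨u⁻¹, H.inv_mem hu,
      fun i hi => by simp [Pi.inv_apply, huc i hi],
      Subgroup.inv_mem _ huM, Subgroup.inv_mem _ haM⟩

private lemma step (H : Subgroup (Fin n → G)) (hn2 : 2 ≤ n)
    (hproj : ∀ i j : Fin n, i ≠ j → ∀ g₁ g₂ : G, ∃ f ∈ H, f i = g₁ ∧ f j = g₂)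
    (htop : H ⊔ commutator (Fin n → G) = ⊤)
    (m : ℕ) (hm1 : 1 ≤ m) (hm : m < n)
    (IHa : ∀ x : Fin n → G, ∃ h ∈ H, ∀ i : Fin n, (i : ℕ) < m → h i = x i) :
    ∀ x : Fin n → G, ∃ h ∈ H, ∀ i : Fin n, (i : ℕ) < m + 1 → h i = x i := by
  set M : Fin n := ⟨m, hm⟩ with hMdef
  have hM : (M : ℕ) = m := rfl
  haveI : (Kk H m M).Normal := Kk_normal H hn2 hproj m M
  have hcomm : ∀ g₁ g₂ : G, ⁅g₁, g₂⁆ ∈ Kk H m M :=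
    comm_mem_Kk H hn2 hproj m hm1 hm M hM IHa
  intro x
  have hx : x ∈ H ⊔ commutator (Fin n → G) := htop ▸ Subgroup.mem_top x
  rw [← SetLike.mem_coe, Subgroup.mul_normal] at hx
  obtain ⟨h, hh, c, hc, rfl⟩ := hx
  obtain ⟨u, hu, huc, huM, hcM⟩ := subclaim H m M IHa hcomm c hc
  have hdel : (u M)⁻¹ * c M ∈ Kk H m M := Subgroup.mul_mem _ (Subgroup.inv_mem _ huM) hcM
  obtain ⟨w, hw, hwc, hwM⟩ := hdel
  refine ⟨h * u * w, H.mul_mem (H.mul_mem hh hu) hw, fun i hi => ?_⟩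
  rcases Nat.lt_or_ge (i : ℕ) m with him | him
  · simp [Pi.mul_apply, huc i him, hwc i him]
  · have hiM : i = M := Fin.ext (by omega)
    subst hiM
    simp only [Pi.mul_apply]
    rw [hwM]
    group


private lemma key (H : Subgroup (Fin n → G)) (hn2 : 2 ≤ n)
    (hproj : ∀ i j : Fin n, i ≠ j → ∀ g₁ g₂ : G, ∃ f ∈ H, f i = g₁ ∧ f j = g₂)
    (htop : H ⊔ commutator (Fin n → G) = ⊤) : H = ⊤ := by
  have main : ∀ m : ℕ, m ≤ n →
      ∀ x : Fin n → G, ∃ h ∈ H, ∀ i : Fin n, (i : ℕ) < m → h i = x i := by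
    intro m
    induction m with
    | zero => exact fun _ x => ⟨1, H.one_mem, fun i hi => absurd hi (by omega)⟩
    | succ m ih =>
      intro hmn x
      rcases Nat.eq_zero_or_pos m with rfl | hm1
      · obtain ⟨f, hf, hf0, -⟩ := hproj ⟨0, by omega⟩ ⟨1, by omega⟩
          (Fin.ne_of_val_ne (by simp)) (x ⟨0, by omega⟩) 1
        refine ⟨f, hf, fun i hi => ?_⟩
        have : i = ⟨0, by omega⟩ := Fin.ext (by simpa using hi)
        rw [this, hf0]
      · exact step H hn2 hproj htop m hm1 (by omega) (ih (by omega)) x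
  rw [eq_top_iff]
  intro x _
  obtain ⟨h, hh, hc⟩ := main n le_rfl x
  have : h = x := funext fun i => hc i i.isLt
  rwa [← this]

end Aux

/-- Let `G` be a group, `n ≥ 2`, and `H` a subgroup of `Gⁿ = (Fin n → G)`.
If for all `i ≠ j` the projection of `H` to the `(i,j)`-coordinates is all of `G × G`,
and `H` is a proper subgroup, then `H` is contained in a proper normal subgroup `N` of `Gⁿ`
with abelian quotient (equivalently, `N` contains all commutators of `Gⁿ`). -/
theorem stmt2 (G : Type*) [Group G] (n : ℕ) (hn : 2 ≤ n)
    (H : Subgroup (Fin n → G))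
    (hproj : ∀ i j : Fin n, i ≠ j → ∀ g₁ g₂ : G, ∃ f ∈ H, f i = g₁ ∧ f j = g₂)
    (hH : H ≠ ⊤) :
    ∃ N : Subgroup (Fin n → G), N.Normal ∧ N ≠ ⊤ ∧ H ≤ N ∧
      ∀ a b : Fin n → G, ⁅a, b⁆ ∈ N := by
  refine ⟨H ⊔ commutator (Fin n → G), ?_, ?_, le_sup_left, ?_⟩
  · constructor
    intro x hx g
    have h1 : ⁅g, x⁆ ∈ H ⊔ commutator (Fin n → G) :=
      Subgroup.mem_sup_right (Subgroup.commutator_mem_commutator (Subgroup.mem_top g) (Subgroup.mem_top x))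
    have : g * x * g⁻¹ = ⁅g, x⁆ * x := by group
    rw [this]
    exact Subgroup.mul_mem _ h1 hx
  · intro hcon
    exact hH (key H hn hproj hcon)
  · intro a b
    exact Subgroup.mem_sup_right (Subgroup.commutator_mem_commutator (Subgroup.mem_top a) (Subgroup.mem_top b))
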